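/- Let u ∈ [(3-√5)/2, 1], and let p, q be i.i.d. [0,1]-valued random variables with E[p] ≤ u. Then E[H(p + q - pq)] ≥ (1-u)·(2/(√5-1))·E[H(p)]. -/

import Mathlib

open Real Set MeasureTheory ProbabilityTheory


noncomputable def φR : ℝ := (1 + Real.sqrt 5) / 2
noncomputable def Kp (x : ℝ) : ℝ := 3*φR + (8*φR - 24)*x + 6*φR*x^2 - 8*x^3 - φR*x^4
noncomputable def Kd (x : ℝ) : ℝ := (8*φR - 24) + 12*φR*x - 24*x^2 - 4*φR*x^3
noncomputable def Vf (x : ℝ) : ℝ :=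
  (4 - φR*x) * (-Real.log (1-x)) - 4*Real.log (1+x) + x^2*(φR*(1+x) - 4)/(1 - x^2)
noncomputable def Vd (x : ℝ) : ℝ :=
  φR * Real.log (1-x) + (4 - φR*x)/(1-x) + (-φR*x^2 + 2*φR*x - 2)/(1-x)^2
    - 4/(1+x) + 2/(1+x)^2

lemma sqrt5_lb : 2.2360 < Real.sqrt 5 := by
  nlinarith [Real.sq_sqrt (by norm_num : (5:ℝ) ≥ 0), Real.sqrt_nonneg 5]
lemma sqrt5_ub : Real.sqrt 5 < 2.2361 := by
  nlinarith [Real.sq_sqrt (by norm_num : (5:ℝ) ≥ 0), Real.sqrt_nonneg 5]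
lemma phi_lb : 1.618 < φR := by unfold φR; nlinarith [sqrt5_lb]
lemma phi_ub : φR < 1.61805 := by unfold φR; nlinarith [sqrt5_ub]
lemma phi_sq : φR ^ 2 = φR + 1 := by
  unfold φR; nlinarith [Real.sq_sqrt (by norm_num : (5:ℝ) ≥ 0)]
lemma phi_pos : 0 < φR := by nlinarith [phi_lb]
lemma phi_inv : φR⁻¹ = φR - 1 :=
  inv_eq_of_mul_eq_one_right (by nlinarith [phi_sq])
lemma psi_pos : 0 < φR - 1 := by nlinarith [phi_lb]
lemma psi_lt_one : φR - 1 < 1 := by nlinarith [phi_ub]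
lemma hlogphi : Real.log φR < 1/2 := by
  have h2 : φR^2 < Real.exp 1 := by nlinarith [Real.exp_one_gt_d9, phi_sq, phi_ub]
  have h3 : Real.log (φR^2) < 1 := (Real.log_lt_iff_lt_exp (pow_pos phi_pos 2)).mpr (by simpa using h2)
  rw [Real.log_pow] at h3; push_cast at h3; linarith
lemma logphi_pos : 0 < Real.log φR := Real.log_pos (by nlinarith [phi_lb])

lemma pK1 {x : ℝ} (hx : x ∈ Icc (0:ℝ) (1/2)) : 0 ≤ Kp x := by
  obtain ⟨h0, h1⟩ := hx
  unfold Kp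
  nlinarith [phi_lb, phi_ub, sq_nonneg x, sq_nonneg (x - 1/2), mul_nonneg h0 h0,
    mul_nonneg (mul_nonneg h0 h0) h0, mul_nonneg (mul_nonneg (mul_nonneg h0 h0) h0) h0,
    mul_nonneg (sub_nonneg.2 h1) h0, mul_nonneg (mul_nonneg (sub_nonneg.2 h1) h0) h0]

lemma pK2 {x : ℝ} (hx : x ∈ Icc (3/5:ℝ) 1) : Kp x ≤ 0 := by
  obtain ⟨h0, h1⟩ := hx
  have ha : (0:ℝ) ≤ x - 3/5 := by linarith
  have hb : (0:ℝ) ≤ 1 - x := by linarith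
  have h0' : (0:ℝ) ≤ x := by linarith
  unfold Kp
  nlinarith [phi_ub, phi_lb, mul_nonneg ha hb, mul_nonneg (mul_nonneg ha hb) h0',
    mul_nonneg (mul_nonneg (mul_nonneg ha hb) h0') h0', mul_nonneg ha h0',
    mul_nonneg (mul_nonneg ha ha) hb, mul_nonneg (mul_nonneg ha ha) ha,
    mul_nonneg (mul_nonneg (mul_nonneg ha ha) ha) ha, sq_nonneg (x-3/5), sq_nonneg x]

lemma pK3 {x : ℝ} (hx : x ∈ Icc (1/2:ℝ) (3/5)) : Kd x < 0 := by
  obtain ⟨h0, h1⟩ := hx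
  have h0' : (0:ℝ) < x := by linarith
  unfold Kd
  nlinarith [phi_lb, phi_ub, mul_pos h0' h0', mul_pos (mul_pos h0' h0') h0']

lemma hasDerivAt_Kp (x : ℝ) : HasDerivAt Kp (Kd x) x := by
  unfold Kp Kd
  exact (((((hasDerivAt_const x (3*φR)).add ((hasDerivAt_id' x).const_mul (8*φR - 24))).add
    ((hasDerivAt_pow 2 x).const_mul (6*φR))).sub ((hasDerivAt_pow 3 x).const_mul 8)).sub
    ((hasDerivAt_pow 4 x).const_mul φR)).congr_deriv (by norm_num; ring)

lemma hasDerivAt_Vf {x : ℝ} (h0 : -1 < x) (h1 : x < 1) : HasDerivAt Vf (Vd x) x := by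
  have hm : (1:ℝ) - x ≠ 0 := by intro h; nlinarith
  have hp : (1:ℝ) + x ≠ 0 := by intro h; nlinarith
  have hmp : (1:ℝ) - x^2 ≠ 0 := by intro h; nlinarith [sq_nonneg x]
  have hlog1 : HasDerivAt (fun x : ℝ => Real.log (1 - x)) (-(1-x)⁻¹) x := by
    have := (Real.hasDerivAt_log hm).comp x ((hasDerivAt_const x 1).sub (hasDerivAt_id' x))
    simpa [Function.comp_def] using this
  have hlog2 : HasDerivAt (fun x : ℝ => Real.log (1 + x)) ((1+x)⁻¹) x := by
    have := (Real.hasDerivAt_log hp).comp x ((hasDerivAt_const x 1).add (hasDerivAt_id' x))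
    simpa [Function.comp_def] using this
  have ht1 : HasDerivAt (fun x : ℝ => (4 - φR*x) * (-Real.log (1-x)))
      ((0 - φR*1) * (-Real.log (1-x)) + (4 - φR*x) * (-(-(1-x)⁻¹))) x :=
    ((hasDerivAt_const x 4).sub ((hasDerivAt_id' x).const_mul φR)).mul hlog1.neg
  have ht4 : HasDerivAt (fun x : ℝ => x^2*(φR*(1+x) - 4)/(1 - x^2))
      (((2*x^(2-1)*(φR*(1+x) - 4) + x^2*(φR*(0+1) - 0)) * (1 - x^2) -
        (x^2*(φR*(1+x) - 4)) * (0 - 2*x^(2-1))) / (1 - x^2)^2) x := by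
    have hnum : HasDerivAt (fun x : ℝ => x^2*(φR*(1+x) - 4))
        (2*x^(2-1)*(φR*(1+x) - 4) + x^2*(φR*(0+1) - 0)) x := by
      have := (hasDerivAt_pow 2 x).mul
        ((((hasDerivAt_const x 1).add (hasDerivAt_id' x)).const_mul φR).sub (hasDerivAt_const x 4))
      exact this.congr_deriv (by norm_num)
    have hden : HasDerivAt (fun x : ℝ => 1 - x^2) (0 - 2*x^(2-1)) x := by
      have := (hasDerivAt_const x 1).sub (hasDerivAt_pow 2 x)
      exact this.congr_deriv (by norm_num)
    exact hnum.div hden hmp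
  unfold Vf Vd
  refine ((ht1.sub (hlog2.const_mul 4)).add ht4).congr_deriv ?_
  norm_num
  field_simp
  ring

lemma hasDerivAt_Vd {x : ℝ} (h0 : -1 < x) (h1 : x < 1) :
    HasDerivAt Vd (x * Kp x / ((1-x)^3*(1+x)^3)) x := by
  have hm : (1:ℝ) - x ≠ 0 := by intro h; nlinarith
  have hp : (1:ℝ) + x ≠ 0 := by intro h; nlinarith
  have hlog1 : HasDerivAt (fun x : ℝ => Real.log (1 - x)) (-(1-x)⁻¹) x := by
    have := (Real.hasDerivAt_log hm).comp x ((hasDerivAt_const x 1).sub (hasDerivAt_id' x))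
    simpa [Function.comp_def] using this
  have hden1 : HasDerivAt (fun x : ℝ => 1 - x) (0 - 1) x :=
    (hasDerivAt_const x 1).sub (hasDerivAt_id' x)
  have hden2 : HasDerivAt (fun x : ℝ => (1 - x)^2) (2*(1-x)^(2-1)*(0-1)) x := hden1.pow 2
  have hden3 : HasDerivAt (fun x : ℝ => 1 + x) (0 + 1) x :=
    (hasDerivAt_const x 1).add (hasDerivAt_id' x)
  have hden4 : HasDerivAt (fun x : ℝ => (1 + x)^2) (2*(1+x)^(2-1)*(0+1)) x := hden3.pow 2
  have ht2 : HasDerivAt (fun x : ℝ => (4 - φR*x)/(1-x))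
      (((0 - φR*1)*(1-x) - (4 - φR*x)*(0-1))/(1-x)^2) x :=
    ((hasDerivAt_const x 4).sub ((hasDerivAt_id' x).const_mul φR)).div hden1 hm
  have ht3 : HasDerivAt (fun x : ℝ => (-φR*x^2 + 2*φR*x - 2)/(1-x)^2)
      (((-φR*(2*x^(2-1)) + 2*φR*1 - 0)*(1-x)^2 - (-φR*x^2 + 2*φR*x - 2)*(2*(1-x)^(2-1)*(0-1)))
        /((1-x)^2)^2) x := by
    have hnum : HasDerivAt (fun x : ℝ => -φR*x^2 + 2*φR*x - 2)
        (-φR*(2*x^(2-1)) + 2*φR*1 - 0) x :=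
      (((hasDerivAt_pow 2 x).const_mul (-φR)).add
        ((hasDerivAt_id' x).const_mul (2*φR))).sub (hasDerivAt_const x 2)
    exact hnum.div hden2 (pow_ne_zero 2 hm)
  have ht4 : HasDerivAt (fun x : ℝ => 4/(1+x)) ((0*(1+x) - 4*(0+1))/(1+x)^2) x :=
    (hasDerivAt_const x 4).div hden3 hp
  have ht5 : HasDerivAt (fun x : ℝ => 2/(1+x)^2)
      ((0*(1+x)^2 - 2*(2*(1+x)^(2-1)*(0+1)))/((1+x)^2)^2) x :=
    (hasDerivAt_const x 2).div hden4 (pow_ne_zero 2 hp)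
  unfold Vd Kp
  refine (((((hlog1.const_mul φR).add ht2).add ht3).sub ht4).add ht5).congr_deriv ?_
  norm_num
  field_simp
  ring

lemma hVd34 : Vd (3/4) < 0 := by
  unfold Vd
  rw [show (1:ℝ) - 3/4 = (4:ℝ)⁻¹ by norm_num, Real.log_inv,
    show (4:ℝ) = 2^2 by norm_num, Real.log_pow]
  push_cast
  ring_nf
  nlinarith [Real.log_two_gt_d9, phi_lb, phi_ub]

lemma hVdpsi : 0 < Vd (φR - 1) := by
  have h2φ : (0:ℝ) < 2 - φR := by nlinarith [phi_ub]
  have hψ0 : (0:ℝ) < φR - 1 := by nlinarith [phi_lb]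
  have hψsq : (1:ℝ) - (φR - 1) = (φR - 1)^2 := by linear_combination - phi_sq
  have hφψ : (1:ℝ) + (φR - 1) = φR := by ring
  have hlogψ : Real.log (φR - 1) = -Real.log φR := by rw [← phi_inv, Real.log_inv]
  have e1 : (φR-1)^2 = 2 - φR := by linear_combination phi_sq
  have e2 : 4 - φR*(φR-1) = 3 := by linear_combination - phi_sq
  have e3 : -φR*(2-φR) + 2*φR*(φR-1) - 2 = 1 - φR := by linear_combination 3*phi_sq
  unfold Vd
  rw [hψsq, Real.log_pow, hlogψ, hφψ, e1, e2, e3]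
  push_cast
  have b1 : (7.853:ℝ) < 3/(2-φR) := by rw [lt_div_iff₀ h2φ]; nlinarith [phi_ub]
  have b2 : (-4.24:ℝ) < (1-φR)/(2-φR)^2 := by
    rw [lt_div_iff₀ (by positivity)]; nlinarith [phi_lb, phi_ub]
  have b3 : 4/φR < 2.473 := by rw [div_lt_iff₀ phi_pos]; nlinarith [phi_lb]
  have b4 : (0.763:ℝ) < 2/φR^2 := by
    rw [lt_div_iff₀ (pow_pos phi_pos 2)]; nlinarith [phi_ub, phi_sq]
  have blog : φR * (2 * -Real.log φR) > -φR := by nlinarith [hlogphi, phi_pos]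
  linarith [b1, b2, b3, b4, blog, phi_ub, phi_lb]

lemma hV78 : Vf (7/8) < 0 := by
  have hB : Real.log 2 - 1/15 ≤ Real.log (1 + 7/8) := by
    have h1 : (1:ℝ) + 7/8 = 2 * (15/16) := by norm_num
    rw [h1, Real.log_mul (by norm_num) (by norm_num)]
    have h2 : Real.log (15/16) = - Real.log (16/15) := by
      rw [show (15:ℝ)/16 = ((16:ℝ)/15)⁻¹ by norm_num, Real.log_inv]
    have h3 : Real.log (16/15) ≤ 16/15 - 1 := Real.log_le_sub_one_of_pos (by norm_num)
    rw [h2]; linarith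
  have hlog8 : Real.log ((1:ℝ) - 7/8) = -(3*Real.log 2) := by
    rw [show (1:ℝ) - 7/8 = (8:ℝ)⁻¹ by norm_num, Real.log_inv,
      show (8:ℝ) = 2^3 by norm_num, Real.log_pow]
    push_cast; ring
  have hp1 : 1.1215 < φR * Real.log 2 := by
    nlinarith [phi_lb, Real.log_two_gt_d9, phi_ub, Real.log_two_lt_d9]
  unfold Vf
  rw [hlog8, show (1:ℝ) - (7/8:ℝ)^2 = 15/64 by norm_num, div_eq_mul_inv]
  norm_num
  nlinarith [Real.log_two_lt_d9, Real.log_two_gt_d9, hB, phi_lb, phi_ub, hp1]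

lemma Vf0 : Vf 0 = 0 := by unfold Vf; norm_num
lemma Vd0 : Vd 0 = 0 := by unfold Vd; norm_num

lemma contVf : ContinuousOn Vf (Ioo (-1:ℝ) 1) :=
  fun x hx => ((hasDerivAt_Vf hx.1 hx.2).continuousAt).continuousWithinAt
lemma contVd : ContinuousOn Vd (Ioo (-1:ℝ) 1) :=
  fun x hx => ((hasDerivAt_Vd hx.1 hx.2).continuousAt).continuousWithinAt
lemma contKp : Continuous Kp :=
  continuous_iff_continuousAt.mpr fun x => (hasDerivAt_Kp x).continuousAt

lemma Vf_sign : ∃ c : ℝ, φR - 1 < c ∧ c ≤ 7/8 ∧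
    (∀ x, 0 < x → x ≤ c → 0 ≤ Vf x) ∧ (∀ x, c ≤ x → x < 1 → Vf x ≤ 0) := by
  -- root a of Kp
  have hKanti : StrictAntiOn Kp (Icc (1/2:ℝ) (3/5)) := by
    apply strictAntiOn_of_deriv_neg (convex_Icc _ _) contKp.continuousOn
    intro x hx
    rw [interior_Icc] at hx
    rw [(hasDerivAt_Kp x).deriv]
    exact pK3 ⟨hx.1.le, hx.2.le⟩
  have hK35 : Kp (3/5) < 0 := by unfold Kp; nlinarith [phi_lb, phi_ub]
  have hK12 : 0 ≤ Kp (1/2) := pK1 ⟨by norm_num, by norm_num⟩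
  obtain ⟨a, ha, hKa⟩ := intermediate_value_Icc' (by norm_num : (1/2:ℝ) ≤ 3/5)
    contKp.continuousOn ⟨hK35.le, hK12⟩
  have ha1 : (1/2:ℝ) ≤ a := ha.1
  have ha2 : a ≤ 3/5 := ha.2
  have Kge : ∀ x, 0 ≤ x → x ≤ a → 0 ≤ Kp x := by
    intro x h0 hxa
    rcases le_or_gt x (1/2) with h | h
    · exact pK1 ⟨h0, h⟩
    · rcases eq_or_lt_of_le hxa with rfl | hlt
      · rw [hKa]
      · have := hKanti ⟨h.le, hxa.trans ha2⟩ ha hlt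
        rw [hKa] at this; linarith
  have Kle : ∀ x, a ≤ x → x ≤ 1 → Kp x ≤ 0 := by
    intro x hax hx1
    rcases le_or_gt (3/5) x with h | h
    · exact pK2 ⟨h, hx1⟩
    · rcases eq_or_lt_of_le hax with rfl | hlt
      · rw [hKa]
      · have := hKanti ha ⟨ha1.trans hax, h.le⟩ hlt
        rw [hKa] at this; linarith
  -- Vd monotone on [0,a], antitone on [a,1)
  have hsub1 : Icc (0:ℝ) a ⊆ Ioo (-1:ℝ) 1 := fun x hx =>
    ⟨by linarith [hx.1], by linarith [hx.2, ha2]⟩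
  have hsub2 : Ico a (1:ℝ) ⊆ Ioo (-1:ℝ) 1 := fun x hx =>
    ⟨by linarith [hx.1, ha1], hx.2⟩
  have hVdmono : MonotoneOn Vd (Icc 0 a) := by
    apply monotoneOn_of_deriv_nonneg (convex_Icc _ _) (contVd.mono hsub1)
    · intro x hx
      rw [interior_Icc] at hx
      exact ((hasDerivAt_Vd (by linarith [hx.1]) (by linarith [hx.2, ha2])).differentiableAt).differentiableWithinAt
    · intro x hx
      rw [interior_Icc] at hx
      rw [(hasDerivAt_Vd (by linarith [hx.1]) (by linarith [hx.2, ha2])).deriv]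
      apply div_nonneg
      · exact mul_nonneg hx.1.le (Kge x hx.1.le hx.2.le)
      · have hx1 : x < 1 := by linarith [hx.2, ha2]
        exact (mul_pos (pow_pos (by linarith : (0:ℝ) < 1 - x) 3)
          (pow_pos (by linarith [hx.1] : (0:ℝ) < 1 + x) 3)).le
  have hVdanti : AntitoneOn Vd (Ico a 1) := by
    apply antitoneOn_of_deriv_nonpos (convex_Ico _ _) (contVd.mono hsub2)
    · intro x hx
      rw [interior_Ico] at hx
      exact ((hasDerivAt_Vd (by linarith [hx.1, ha1]) hx.2).differentiableAt).differentiableWithinAt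
    · intro x hx
      rw [interior_Ico] at hx
      rw [(hasDerivAt_Vd (by linarith [hx.1, ha1]) hx.2).deriv]
      apply div_nonpos_of_nonpos_of_nonneg
      · exact mul_nonpos_of_nonneg_of_nonpos (by linarith [hx.1, ha1]) (Kle x hx.1.le hx.2.le)
      · have hx1 : x < 1 := hx.2
        have hx0 : (0:ℝ) < x := by linarith [hx.1, ha1]
        exact (mul_pos (pow_pos (by linarith : (0:ℝ) < 1 - x) 3)
          (pow_pos (by linarith : (0:ℝ) < 1 + x) 3)).le
  have hVda : 0 ≤ Vd a := by
    have := hVdmono (left_mem_Icc.2 (by linarith)) (right_mem_Icc.2 (by linarith)) (by linarith)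
    rwa [Vd0] at this
  -- root b of Vd
  obtain ⟨b, hb, hVdb⟩ := intermediate_value_Icc' (by linarith : a ≤ (3/4:ℝ))
    (contVd.mono (fun x hx => ⟨by linarith [hx.1, ha1], by linarith [hx.2]⟩)) ⟨hVd34.le, hVda⟩
  have hb1 : a ≤ b := hb.1
  have hb2 : b ≤ 3/4 := hb.2
  have hψb : φR - 1 < b := by
    by_contra hcon
    push_neg at hcon
    have hmem : φR - 1 ∈ Ico a 1 := ⟨by nlinarith [phi_lb], psi_lt_one⟩
    have := hVdanti ⟨hb1, by linarith⟩ hmem hcon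
    rw [hVdb] at this
    linarith [hVdpsi]
  have hVdge' : ∀ x, 0 ≤ x → x ≤ b → 0 ≤ Vd x := by
    intro x h0 hxb
    rcases le_or_gt x a with h | h
    · have := hVdmono (left_mem_Icc.2 (by linarith)) ⟨h0, h⟩ h0
      rwa [Vd0] at this
    · have := hVdanti ⟨h.le, by linarith⟩ ⟨hb1, by linarith⟩ hxb
      rw [hVdb] at this; linarith
  have hVdle : ∀ x, b ≤ x → x < 1 → Vd x ≤ 0 := by
    intro x hbx hx1
    have := hVdanti ⟨hb1, by linarith⟩ ⟨hb1.trans hbx, hx1⟩ hbx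
    rwa [hVdb] at this
  -- Vf monotone on [0,b], antitone on [b,1)
  have hsub3 : Icc (0:ℝ) b ⊆ Ioo (-1:ℝ) 1 := fun x hx =>
    ⟨by linarith [hx.1], by linarith [hx.2]⟩
  have hsub4 : Ico b (1:ℝ) ⊆ Ioo (-1:ℝ) 1 := fun x hx =>
    ⟨by linarith [hx.1, hb1, ha1], hx.2⟩
  have hVmono : MonotoneOn Vf (Icc 0 b) := by
    apply monotoneOn_of_deriv_nonneg (convex_Icc _ _) (contVf.mono hsub3)
    · intro x hx
      rw [interior_Icc] at hx
      exact ((hasDerivAt_Vf (by linarith [hx.1]) (by linarith [hx.2])).differentiableAt).differentiableWithinAt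
    · intro x hx
      rw [interior_Icc] at hx
      rw [(hasDerivAt_Vf (by linarith [hx.1]) (by linarith [hx.2])).deriv]
      exact hVdge' x hx.1.le hx.2.le
  have hVanti : AntitoneOn Vf (Ico b 1) := by
    apply antitoneOn_of_deriv_nonpos (convex_Ico _ _) (contVf.mono hsub4)
    · intro x hx
      rw [interior_Ico] at hx
      exact ((hasDerivAt_Vf (by linarith [hx.1, hb1, ha1]) hx.2).differentiableAt).differentiableWithinAt
    · intro x hx
      rw [interior_Ico] at hx
      rw [(hasDerivAt_Vf (by linarith [hx.1, hb1, ha1]) hx.2).deriv]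
      exact hVdle x hx.1.le hx.2
  have hVb : 0 ≤ Vf b := by
    have := hVmono (left_mem_Icc.2 (by linarith)) (right_mem_Icc.2 (by linarith)) (by linarith)
    rwa [Vf0] at this
  -- root c of Vf
  obtain ⟨c, hc, hVc⟩ := intermediate_value_Icc' (by linarith : b ≤ (7/8:ℝ))
    (contVf.mono (fun x hx => ⟨by linarith [hx.1, hb1, ha1], by linarith [hx.2]⟩))
    ⟨hV78.le, hVb⟩
  refine ⟨c, by linarith [hc.1], hc.2, ?_, ?_⟩
  · intro x hx0 hxc
    rcases le_or_gt x b with h | h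
    · have := hVmono (left_mem_Icc.2 (by linarith)) ⟨hx0.le, h⟩ hx0.le
      rwa [Vf0] at this
    · have := hVanti ⟨h.le, by linarith [hc.2]⟩ ⟨hc.1, by linarith [hc.2]⟩ hxc
      rw [hVc] at this; linarith
  · intro x hcx hx1
    have := hVanti ⟨hc.1, by linarith [hc.2]⟩ ⟨hc.1.trans hcx, hx1⟩ hcx
    rwa [hVc] at this
noncomputable def Ff (s : ℝ) : ℝ := Real.binEntropy (Real.exp (-s)) * Real.exp s
noncomputable def Fd (s : ℝ) : ℝ := -(Real.exp s * Real.log (1 - Real.exp (-s)))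
noncomputable def Fdd (s : ℝ) : ℝ := Fd s - 1/(1 - Real.exp (-s))
noncomputable def Rf (s : ℝ) : ℝ := Ff (2*s) - φR * Ff s
noncomputable def Rd (s : ℝ) : ℝ := 2 * Fd (2*s) - φR * Fd s

lemma exp_neg_lt_one {s : ℝ} (hs : 0 < s) : Real.exp (-s) < 1 :=
  Real.exp_lt_one_iff.mpr (by linarith)

lemma hasDerivAt_exp_neg (s : ℝ) : HasDerivAt (fun s : ℝ => Real.exp (-s)) (-Real.exp (-s)) s := by
  simpa [Function.comp_def] using (Real.hasDerivAt_exp (-s)).comp s ((hasDerivAt_id' s).neg)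

lemma hasDerivAt_Ff {s : ℝ} (hs : 0 < s) : HasDerivAt Ff (Fd s) s := by
  have hx0 : Real.exp (-s) ≠ 0 := (Real.exp_pos _).ne'
  have hx1 : Real.exp (-s) ≠ 1 := (exp_neg_lt_one hs).ne
  have h2 : HasDerivAt (fun s : ℝ => Real.binEntropy (Real.exp (-s)))
      ((Real.log (1 - Real.exp (-s)) - Real.log (Real.exp (-s))) * (-Real.exp (-s))) s := by
    have := (Real.hasDerivAt_binEntropy hx0 hx1).comp s (hasDerivAt_exp_neg s)
    simpa [Function.comp_def] using this
  have h3 := h2.mul (Real.hasDerivAt_exp s)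
  unfold Ff Fd
  refine h3.congr_deriv ?_
  simp only [Real.binEntropy, Real.log_inv]
  ring

lemma hasDerivAt_Fd {s : ℝ} (hs : 0 < s) : HasDerivAt Fd (Fdd s) s := by
  have hx1 : (1:ℝ) - Real.exp (-s) ≠ 0 := by
    have := exp_neg_lt_one hs; intro h; nlinarith
  have hlog : HasDerivAt (fun s : ℝ => Real.log (1 - Real.exp (-s)))
      ((1 - Real.exp (-s))⁻¹ * (0 - -Real.exp (-s))) s := by
    have := (Real.hasDerivAt_log hx1).comp s
      ((hasDerivAt_const s 1).sub (hasDerivAt_exp_neg s))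
    simpa [Function.comp_def] using this
  have h3 := ((Real.hasDerivAt_exp s).mul hlog).neg
  have hxe : Real.exp (-s) * Real.exp s = 1 := by
    rw [← Real.exp_add]; simp
  unfold Fd Fdd
  refine h3.congr_deriv ?_
  unfold Fd
  field_simp
  linear_combination -hxe

lemma hasDerivAt_Rf {s : ℝ} (hs : 0 < s) : HasDerivAt Rf (Rd s) s := by
  have h2s : HasDerivAt (fun s : ℝ => Ff (2*s)) (Fd (2*s) * 2) s := by
    have := (hasDerivAt_Ff (by linarith : (0:ℝ) < 2*s)).comp s ((hasDerivAt_id' s).const_mul 2)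
    simpa [Function.comp_def] using this
  unfold Rf Rd
  exact (h2s.sub ((hasDerivAt_Ff hs).const_mul φR)).congr_deriv (by ring)

lemma rdd_eq {s : ℝ} (hs : 0 < s) :
    4 * Fdd (2*s) - φR * Fdd s = Vf (Real.exp (-s)) / (Real.exp (-s))^2 := by
  have hx0 : (0:ℝ) < Real.exp (-s) := Real.exp_pos _
  have hx1 : Real.exp (-s) < 1 := exp_neg_lt_one hs
  have hx2 : Real.exp (-(2*s)) = (Real.exp (-s))^2 := by
    rw [show -(2*s) = -s + -s by ring, Real.exp_add]; ring
  have hE1 : Real.exp s = (Real.exp (-s))⁻¹ := by rw [Real.exp_neg, inv_inv]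
  have hE2 : Real.exp (2*s) = ((Real.exp (-s))^2)⁻¹ := by
    rw [← hx2, ← Real.exp_neg, neg_neg]
  have hm : (1:ℝ) - Real.exp (-s) ≠ 0 := by intro h; nlinarith
  have hp : (1:ℝ) + Real.exp (-s) ≠ 0 := by intro h; nlinarith
  have hsplit : Real.log (1 - (Real.exp (-s))^2)
      = Real.log (1 - Real.exp (-s)) + Real.log (1 + Real.exp (-s)) := by
    rw [show (1:ℝ) - (Real.exp (-s))^2 = (1 - Real.exp (-s)) * (1 + Real.exp (-s)) by ring,
      Real.log_mul hm hp]
  unfold Fdd Fd Vf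
  rw [hx2, hE1, hE2, hsplit]
  have hmp : (1:ℝ) - (Real.exp (-s))^2 ≠ 0 := by intro h; nlinarith
  field_simp
  ring

lemma hasDerivAt_Rd {s : ℝ} (hs : 0 < s) :
    HasDerivAt Rd (Vf (Real.exp (-s)) / (Real.exp (-s))^2) s := by
  have h2s : HasDerivAt (fun s : ℝ => Fd (2*s)) (Fdd (2*s) * 2) s := by
    have := (hasDerivAt_Fd (by linarith : (0:ℝ) < 2*s)).comp s ((hasDerivAt_id' s).const_mul 2)
    simpa [Function.comp_def] using this
  have h := (h2s.const_mul 2).sub ((hasDerivAt_Fd hs).const_mul φR)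
  unfold Rd
  refine h.congr_deriv ?_
  rw [← rdd_eq hs]; ring

lemma Rf0 : Rf 0 = 0 := by unfold Rf Ff; norm_num

lemma exp_neg_s0 : Real.exp (-(Real.log φR)) = φR - 1 := by
  rw [Real.exp_neg, Real.exp_log phi_pos, phi_inv]
lemma exp_s0 : Real.exp (Real.log φR) = φR := Real.exp_log phi_pos
lemma exp_neg_2s0 : Real.exp (-(2*Real.log φR)) = (φR - 1)^2 := by
  rw [show -(2*Real.log φR) = -Real.log φR + -Real.log φR by ring, Real.exp_add, exp_neg_s0]
  ring
lemma exp_2s0 : Real.exp (2*Real.log φR) = φR^2 := by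
  rw [show 2*Real.log φR = Real.log φR + Real.log φR by ring, Real.exp_add, exp_s0]
  ring

lemma Rf_s0 : Rf (Real.log φR) = 0 := by
  unfold Rf Ff
  rw [exp_neg_2s0, exp_2s0, exp_neg_s0, exp_s0]
  rw [show (φR-1)^2 = 1 - (φR-1) by linear_combination phi_sq, Real.binEntropy_one_sub]
  ring

lemma Rd_s0 : Rd (Real.log φR) = 0 := by
  unfold Rd Fd
  rw [exp_neg_2s0, exp_2s0, exp_neg_s0, exp_s0]
  rw [show (1:ℝ) - (φR-1)^2 = φR - 1 by linear_combination -phi_sq]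
  rw [show (1:ℝ) - (φR-1) = (φR-1)^2 by linear_combination -phi_sq, Real.log_pow]
  push_cast; ring

lemma lemA : ∀ s : ℝ, 0 < s → 0 ≤ Rf s := by
  obtain ⟨c, hc1, hc2, hcge, hcle⟩ := Vf_sign
  have hc0 : 0 < c := lt_trans psi_pos hc1
  have hcub : c < 1 := lt_of_le_of_lt hc2 (by norm_num)
  set s₁ := -Real.log c with hs₁def
  have hs₁pos : 0 < s₁ := neg_pos.2 (Real.log_neg hc0 hcub)
  have hexps₁ : Real.exp (-s₁) = c := by rw [hs₁def, neg_neg, Real.exp_log hc0]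
  have hs₀ : s₁ ≤ Real.log φR := by
    have h := Real.log_le_log psi_pos hc1.le
    rw [← phi_inv, Real.log_inv] at h
    rw [hs₁def]; linarith
  have hRfcont : Continuous Rf := by
    have : Continuous Ff := by
      unfold Ff
      exact (Real.binEntropy_continuous.comp (Real.continuous_exp.comp continuous_neg)).mul
        Real.continuous_exp
    unfold Rf
    exact ((this.comp (continuous_const.mul continuous_id)).sub (continuous_const.mul this))
  have hRdmono : MonotoneOn Rd (Ici s₁) := by
    apply monotoneOn_of_deriv_nonneg (convex_Ici _)
    · exact fun s hs =>
        (hasDerivAt_Rd (lt_of_lt_of_le hs₁pos hs)).continuousAt.continuousWithinAt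
    · intro s hs
      rw [interior_Ici] at hs
      exact (hasDerivAt_Rd (hs₁pos.trans hs)).differentiableAt.differentiableWithinAt
    · intro s hs
      rw [interior_Ici] at hs
      rw [(hasDerivAt_Rd (hs₁pos.trans hs)).deriv]
      apply div_nonneg _ (sq_nonneg _)
      apply hcge _ (Real.exp_pos _)
      rw [← hexps₁]
      exact Real.exp_le_exp.2 (by have := mem_Ioi.1 hs; linarith)
  have hRdanti : AntitoneOn Rd (Ioc 0 s₁) := by
    apply antitoneOn_of_deriv_nonpos (convex_Ioc _ _)
    · exact fun s hs => (hasDerivAt_Rd hs.1).continuousAt.continuousWithinAt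
    · intro s hs
      rw [interior_Ioc] at hs
      exact (hasDerivAt_Rd hs.1).differentiableAt.differentiableWithinAt
    · intro s hs
      rw [interior_Ioc] at hs
      rw [(hasDerivAt_Rd hs.1).deriv]
      apply div_nonpos_of_nonpos_of_nonneg _ (sq_nonneg _)
      apply hcle
      · rw [← hexps₁]; exact Real.exp_le_exp.2 (by linarith [hs.2])
      · exact exp_neg_lt_one hs.1
  have hmono1 : MonotoneOn Rf (Ici (Real.log φR)) := by
    apply monotoneOn_of_deriv_nonneg (convex_Ici _) hRfcont.continuousOn
    · intro s hs
      rw [interior_Ici] at hs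
      exact (hasDerivAt_Rf (logphi_pos.trans hs)).differentiableAt.differentiableWithinAt
    · intro s hs
      rw [interior_Ici] at hs
      rw [(hasDerivAt_Rf (logphi_pos.trans hs)).deriv]
      have := hRdmono (mem_Ici.2 hs₀) (mem_Ici.2 (hs₀.trans hs.le)) hs.le
      rw [Rd_s0] at this; exact this
  have hIcc : ∀ s, s₁ ≤ s → s ≤ Real.log φR → 0 ≤ Rf s := by
    intro s h1 h2
    have hanti1 : AntitoneOn Rf (Icc s₁ (Real.log φR)) := by
      apply antitoneOn_of_deriv_nonpos (convex_Icc _ _) hRfcont.continuousOn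
      · intro t ht
        rw [interior_Icc] at ht
        exact (hasDerivAt_Rf (hs₁pos.trans ht.1)).differentiableAt.differentiableWithinAt
      · intro t ht
        rw [interior_Icc] at ht
        rw [(hasDerivAt_Rf (hs₁pos.trans ht.1)).deriv]
        have := hRdmono (mem_Ici.2 ht.1.le) (mem_Ici.2 (ht.1.le.trans ht.2.le)) ht.2.le
        rw [Rd_s0] at this; linarith
    have := hanti1 ⟨h1, h2⟩ ⟨hs₀, le_rfl⟩ h2
    rw [Rf_s0] at this; exact this
  intro s hs
  rcases le_or_gt (Real.log φR) s with h | h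
  · have := hmono1 (mem_Ici.2 le_rfl) (mem_Ici.2 h) h
    rw [Rf_s0] at this; exact this
  rcases le_or_gt s₁ s with h2 | h2
  · exact hIcc s h2 h.le
  rcases le_or_gt (Rd s) 0 with hsign | hsign
  · have hanti2 : AntitoneOn Rf (Icc s s₁) := by
      apply antitoneOn_of_deriv_nonpos (convex_Icc _ _) hRfcont.continuousOn
      · intro t ht
        rw [interior_Icc] at ht
        exact (hasDerivAt_Rf (hs.trans ht.1)).differentiableAt.differentiableWithinAt
      · intro t ht
        rw [interior_Icc] at ht
        rw [(hasDerivAt_Rf (hs.trans ht.1)).deriv]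
        have := hRdanti (mem_Ioc.2 ⟨hs, h2.le⟩) (mem_Ioc.2 ⟨hs.trans ht.1, ht.2.le⟩) ht.1.le
        linarith
    have h3 := hanti2 ⟨le_rfl, h2.le⟩ ⟨h2.le, le_rfl⟩ h2.le
    have h4 := hIcc s₁ le_rfl hs₀
    linarith
  · have hmono2 : MonotoneOn Rf (Icc 0 s) := by
      apply monotoneOn_of_deriv_nonneg (convex_Icc _ _) hRfcont.continuousOn
      · intro t ht
        rw [interior_Icc] at ht
        exact (hasDerivAt_Rf ht.1).differentiableAt.differentiableWithinAt
      · intro t ht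
        rw [interior_Icc] at ht
        rw [(hasDerivAt_Rf ht.1).deriv]
        have := hRdanti (mem_Ioc.2 ⟨ht.1, by linarith [ht.2]⟩) (mem_Ioc.2 ⟨hs, h2.le⟩) ht.2.le
        linarith
    have := hmono2 ⟨le_rfl, hs.le⟩ ⟨hs.le, le_rfl⟩ hs.le
    rw [Rf0] at this; exact this
lemma lemA_x {x : ℝ} (hx0 : 0 < x) (hx1 : x < 1) :
    φR * x * Real.binEntropy x ≤ Real.binEntropy (x^2) := by
  have hs : 0 < -Real.log x := neg_pos.2 (Real.log_neg hx0 hx1)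
  have h := lemA _ hs
  unfold Rf Ff at h
  have e1 : Real.exp (-(2 * -Real.log x)) = x^2 := by
    rw [show -(2 * -Real.log x) = Real.log x + Real.log x by ring, Real.exp_add,
      Real.exp_log hx0]
    ring
  have e2 : Real.exp (2 * -Real.log x) = (x^2)⁻¹ := by
    rw [show 2 * -Real.log x = -(Real.log x + Real.log x) by ring, Real.exp_neg, Real.exp_add,
      Real.exp_log hx0, ← pow_two]
  have e3 : Real.exp (- -Real.log x) = x := by rw [neg_neg, Real.exp_log hx0]
  have e4 : Real.exp (-Real.log x) = x⁻¹ := by rw [Real.exp_neg, Real.exp_log hx0]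
  rw [e1, e2, e3, e4] at h
  have key : (Real.binEntropy (x^2) * (x^2)⁻¹ - φR * (Real.binEntropy x * x⁻¹)) * x^2
      = Real.binEntropy (x^2) - φR * x * Real.binEntropy x := by
    field_simp
  have h2 := mul_nonneg h (pow_pos hx0 2).le
  rw [key] at h2
  linarith

lemma hasDerivAt_log_one_sub {x : ℝ} (hm : (1:ℝ) - x ≠ 0) :
    HasDerivAt (fun x : ℝ => Real.log (1 - x)) (-(1-x)⁻¹) x := by
  have := (Real.hasDerivAt_log hm).comp x ((hasDerivAt_const x 1).sub (hasDerivAt_id' x))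
  simpa [Function.comp_def] using this

lemma hW_mono : MonotoneOn (fun x : ℝ => -Real.log (1-x) / x) (Ioo (0:ℝ) 1) := by
  have hder : ∀ x : ℝ, x ∈ Ioo (0:ℝ) 1 → HasDerivAt (fun x : ℝ => -Real.log (1-x) / x)
      (((1-x)⁻¹ * x - (-Real.log (1-x)) * 1) / x^2) x := by
    intro x hx
    have hm : (1:ℝ) - x ≠ 0 := by have := hx.2; intro h; nlinarith
    exact (((hasDerivAt_log_one_sub hm).neg).congr_deriv (by ring)).div
      (hasDerivAt_id' x) (ne_of_gt hx.1)
  apply monotoneOn_of_deriv_nonneg (convex_Ioo _ _)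
    (fun x hx => (hder x hx).continuousAt.continuousWithinAt)
  · rw [interior_Ioo]
    exact fun x hx => (hder x hx).differentiableAt.differentiableWithinAt
  · intro x hx
    rw [interior_Ioo] at hx
    rw [(hder x hx).deriv]
    apply div_nonneg _ (sq_nonneg _)
    have h1x : (0:ℝ) < 1 - x := by linarith [hx.2]
    have h := Real.log_le_sub_one_of_pos (inv_pos.2 h1x)
    rw [Real.log_inv] at h
    have h2 : (1-x)⁻¹ * (1-x) = 1 := inv_mul_cancel₀ (ne_of_gt h1x)
    nlinarith [h, h2, hx.1]

lemma Fd_eq (s : ℝ) : Fd s = -Real.log (1 - Real.exp (-s)) / Real.exp (-s) := by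
  unfold Fd
  rw [div_eq_mul_inv, Real.exp_neg, inv_inv]
  ring

lemma Fd_anti : AntitoneOn Fd (Ioi (0:ℝ)) := by
  intro s hs t ht hst
  rw [Fd_eq, Fd_eq]
  have h1 : Real.exp (-t) ∈ Ioo (0:ℝ) 1 := ⟨Real.exp_pos _, exp_neg_lt_one (mem_Ioi.1 ht)⟩
  have h2 : Real.exp (-s) ∈ Ioo (0:ℝ) 1 := ⟨Real.exp_pos _, exp_neg_lt_one (mem_Ioi.1 hs)⟩
  exact hW_mono h1 h2 (Real.exp_le_exp.2 (by linarith))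

lemma concF : ConcaveOn ℝ (Ioi 0) Ff := by
  apply AntitoneOn.concaveOn_of_deriv (convex_Ioi 0)
  · exact fun s hs => (hasDerivAt_Ff (mem_Ioi.1 hs)).continuousAt.continuousWithinAt
  · rw [interior_Ioi]
    exact fun s hs => (hasDerivAt_Ff (mem_Ioi.1 hs)).differentiableAt.differentiableWithinAt
  · rw [interior_Ioi]
    intro s hs t ht hst
    rw [(hasDerivAt_Ff (mem_Ioi.1 hs)).deriv, (hasDerivAt_Ff (mem_Ioi.1 ht)).deriv]
    exact Fd_anti hs ht hst

lemma key2var {x y : ℝ} (hx : x ∈ Icc (0:ℝ) 1) (hy : y ∈ Icc (0:ℝ) 1) :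
    φR/2 * (x * Real.binEntropy y + y * Real.binEntropy x) ≤ Real.binEntropy (x*y) := by
  obtain ⟨hx0, hx1⟩ := hx
  obtain ⟨hy0, hy1⟩ := hy
  have hbx := Real.binEntropy_nonneg hx0 hx1
  have hby := Real.binEntropy_nonneg hy0 hy1
  rcases eq_or_lt_of_le hx0 with rfl | hx0'
  · simp
  rcases hx1.eq_or_lt with rfl | hx1'
  · simp only [one_mul, Real.binEntropy_one, mul_zero, add_zero]
    nlinarith [phi_ub, hby]
  rcases eq_or_lt_of_le hy0 with rfl | hy0'
  · simp
  rcases hy1.eq_or_lt with rfl | hy1'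
  · simp only [mul_one, Real.binEntropy_one, mul_zero, zero_add]
    nlinarith [phi_ub, hbx]
  have hs : 0 < -Real.log x := neg_pos.2 (Real.log_neg hx0' hx1')
  have ht : 0 < -Real.log y := neg_pos.2 (Real.log_neg hy0' hy1')
  have hmid := concF.2 (mem_Ioi.2 hs) (mem_Ioi.2 ht)
    (by norm_num : (0:ℝ) ≤ 1/2) (by norm_num : (0:ℝ) ≤ 1/2) (by norm_num : (1/2:ℝ) + 1/2 = 1)
  simp only [smul_eq_mul] at hmid
  have hm : 0 < (-Real.log x + -Real.log y)/2 := by linarith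
  have hA := lemA _ hm
  unfold Rf at hA
  rw [show 2*((-Real.log x + -Real.log y)/2) = -Real.log x + -Real.log y by ring] at hA
  rw [show 1/2 * -Real.log x + 1/2 * -Real.log y = (-Real.log x + -Real.log y)/2 by ring] at hmid
  have hcomb : φR * ((Ff (-Real.log x) + Ff (-Real.log y))/2)
      ≤ Ff (-Real.log x + -Real.log y) := by
    nlinarith [mul_le_mul_of_nonneg_left hmid phi_pos.le, hA]
  unfold Ff at hcomb
  have e1 : Real.exp (-(-Real.log x + -Real.log y)) = x*y := by
    rw [show -(-Real.log x + -Real.log y) = Real.log x + Real.log y by ring, Real.exp_add,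
      Real.exp_log hx0', Real.exp_log hy0']
  have e2 : Real.exp (-Real.log x + -Real.log y) = (x*y)⁻¹ := by
    rw [show -Real.log x + -Real.log y = -(Real.log x + Real.log y) by ring, Real.exp_neg,
      Real.exp_add, Real.exp_log hx0', Real.exp_log hy0']
  have e3 : Real.exp (- -Real.log x) = x := by rw [neg_neg, Real.exp_log hx0']
  have e4 : Real.exp (-Real.log x) = x⁻¹ := by rw [Real.exp_neg, Real.exp_log hx0']
  have e5 : Real.exp (- -Real.log y) = y := by rw [neg_neg, Real.exp_log hy0']
  have e6 : Real.exp (-Real.log y) = y⁻¹ := by rw [Real.exp_neg, Real.exp_log hy0']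
  rw [e1, e2, e3, e4, e5, e6] at hcomb
  have hxy : (0:ℝ) < x*y := mul_pos hx0' hy0'
  have key : φR/2 * (x * Real.binEntropy y + y * Real.binEntropy x)
      = (φR * ((Real.binEntropy x * x⁻¹ + Real.binEntropy y * y⁻¹)/2)) * (x*y) := by
    field_simp; ring
  have key2 : Real.binEntropy (x*y) = (Real.binEntropy (x*y) * (x*y)⁻¹) * (x*y) := by
    field_simp
  rw [key, key2]
  exact mul_le_mul_of_nonneg_right hcomb hxy.le
noncomputable def binEnt (p : ℝ) : ℝ := -p * Real.log p - (1 - p) * Real.log (1 - p)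

lemma binEnt_eq : binEnt = Real.binEntropy := by
  funext p
  unfold binEnt
  rw [Real.binEntropy, Real.log_inv, Real.log_inv]
  ring

theorem stmt14 {Ω : Type*} [MeasurableSpace Ω] {μ : Measure Ω} [IsProbabilityMeasure μ]
    (u : ℝ) (hu0 : (3 - Real.sqrt 5) / 2 ≤ u) (hu1 : u ≤ 1)
    (p q : Ω → ℝ) (hp : Measurable p) (hq : Measurable q)
    (hpq : IndepFun p q μ) (hid : IdentDistrib p q μ μ)
    (hp01 : ∀ ω, p ω ∈ Set.Icc (0:ℝ) 1)
    (hmean : ∫ ω, p ω ∂μ ≤ u) :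
    ∫ ω, binEnt (p ω + q ω - p ω * q ω) ∂μ
      ≥ (1 - u) * (2 / (Real.sqrt 5 - 1)) * ∫ ω, binEnt (p ω) ∂μ := by
  have h5 : Real.sqrt 5 ^ 2 = 5 := Real.sq_sqrt (by norm_num)
  have hphi : 2 / (Real.sqrt 5 - 1) = φR := by
    have hne : Real.sqrt 5 - 1 ≠ 0 := by nlinarith [sqrt5_lb]
    rw [div_eq_iff hne]
    unfold φR
    linear_combination (-1/2) * h5
  simp only [binEnt_eq, hphi]
  -- a.e. bounds for q
  have hq01 : ∀ᵐ ω ∂μ, q ω ∈ Set.Icc (0:ℝ) 1 := by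
    have h1 : ∀ᵐ y ∂(μ.map p), y ∈ Set.Icc (0:ℝ) 1 :=
      (ae_map_iff hp.aemeasurable measurableSet_Icc).2 (ae_of_all _ hp01)
    rw [hid.map_eq] at h1
    exact (ae_map_iff hq.aemeasurable measurableSet_Icc).1 h1
  -- integrability helper
  have hint : ∀ f : Ω → ℝ, Measurable f → (∀ᵐ ω ∂μ, f ω ∈ Set.Icc (0:ℝ) 1) →
      Integrable (fun ω => Real.binEntropy (f ω)) μ := by
    intro f hf hf01
    apply Integrable.mono' (integrable_const (Real.log 2))
    · exact (Real.binEntropy_continuous.measurable.comp hf).aestronglyMeasurable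
    · filter_upwards [hf01] with ω hω
      rw [Real.norm_eq_abs, abs_of_nonneg (Real.binEntropy_nonneg hω.1 hω.2)]
      exact Real.binEntropy_le_log_two
  have hmp : Measurable (fun ω => 1 - p ω) := measurable_const.sub hp
  have hmq : Measurable (fun ω => 1 - q ω) := measurable_const.sub hq
  have hp01' : ∀ᵐ ω ∂μ, (1 - p ω) ∈ Set.Icc (0:ℝ) 1 := ae_of_all _ fun ω =>
    ⟨by linarith [(hp01 ω).2], by linarith [(hp01 ω).1]⟩
  have hq01' : ∀ᵐ ω ∂μ, (1 - q ω) ∈ Set.Icc (0:ℝ) 1 := by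
    filter_upwards [hq01] with ω hω
    exact ⟨by linarith [hω.2], by linarith [hω.1]⟩
  have hpq01 : ∀ᵐ ω ∂μ, ((1 - p ω) * (1 - q ω)) ∈ Set.Icc (0:ℝ) 1 := by
    filter_upwards [hq01] with ω hω
    constructor
    · exact mul_nonneg (by linarith [(hp01 ω).2]) (by linarith [hω.2])
    · nlinarith [(hp01 ω).1, (hp01 ω).2, hω.1, hω.2]
  -- rewrite LHS
  have hpt : ∀ ω, Real.binEntropy (p ω + q ω - p ω * q ω)
      = Real.binEntropy ((1 - p ω) * (1 - q ω)) := fun ω => by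
    rw [show p ω + q ω - p ω * q ω = 1 - (1 - p ω) * (1 - q ω) by ring,
      Real.binEntropy_one_sub]
  simp only [hpt]
  -- integrable functions
  have hI1 : Integrable (fun ω => Real.binEntropy ((1 - p ω) * (1 - q ω))) μ :=
    hint _ (hmp.mul hmq) hpq01
  have hIbq : Integrable (fun ω => Real.binEntropy (1 - q ω)) μ := hint _ hmq hq01'
  have hIbp : Integrable (fun ω => Real.binEntropy (1 - p ω)) μ := hint _ hmp hp01'
  have hIp : Integrable (fun ω => 1 - p ω) μ := by
    apply Integrable.mono' (integrable_const 1) hmp.aestronglyMeasurable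
    filter_upwards with ω
    rw [Real.norm_eq_abs, abs_le]
    constructor <;> [linarith [(hp01 ω).2]; linarith [(hp01 ω).1]]
  have hIq : Integrable (fun ω => 1 - q ω) μ := by
    apply Integrable.mono' (integrable_const 1) hmq.aestronglyMeasurable
    filter_upwards [hq01] with ω hω
    rw [Real.norm_eq_abs, abs_le]
    constructor <;> [linarith [hω.2]; linarith [hω.1]]
  have hImul1 : Integrable (fun ω => (1 - p ω) * Real.binEntropy (1 - q ω)) μ := by
    apply Integrable.mono' (integrable_const (Real.log 2))
    · exact (hmp.mul ((Real.binEntropy_continuous.measurable).comp hmq)).aestronglyMeasurable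
    · filter_upwards [hq01] with ω hω
      rw [Real.norm_eq_abs, abs_mul]
      have h1 : |1 - p ω| ≤ 1 := by
        rw [abs_le]; constructor <;> [linarith [(hp01 ω).2]; linarith [(hp01 ω).1]]
      have h2 : |Real.binEntropy (1 - q ω)| ≤ Real.log 2 := by
        rw [abs_of_nonneg (Real.binEntropy_nonneg (by linarith [hω.2]) (by linarith [hω.1]))]
        exact Real.binEntropy_le_log_two
      calc |1 - p ω| * |Real.binEntropy (1 - q ω)| ≤ 1 * Real.log 2 :=
        mul_le_mul h1 h2 (abs_nonneg _) zero_le_one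
      _ = Real.log 2 := one_mul _
  have hImul2 : Integrable (fun ω => (1 - q ω) * Real.binEntropy (1 - p ω)) μ := by
    apply Integrable.mono' (integrable_const (Real.log 2))
    · exact (hmq.mul ((Real.binEntropy_continuous.measurable).comp hmp)).aestronglyMeasurable
    · filter_upwards [hq01] with ω hω
      rw [Real.norm_eq_abs, abs_mul]
      have h1 : |1 - q ω| ≤ 1 := by
        rw [abs_le]; constructor <;> [linarith [hω.2]; linarith [hω.1]]
      have h2 : |Real.binEntropy (1 - p ω)| ≤ Real.log 2 := by
        rw [abs_of_nonneg (Real.binEntropy_nonneg (by linarith [(hp01 ω).2])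
          (by linarith [(hp01 ω).1]))]
        exact Real.binEntropy_le_log_two
      calc |1 - q ω| * |Real.binEntropy (1 - p ω)| ≤ 1 * Real.log 2 :=
        mul_le_mul h1 h2 (abs_nonneg _) zero_le_one
      _ = Real.log 2 := one_mul _
  -- pointwise inequality
  have hptwise : ∀ᵐ ω ∂μ, φR/2 * ((1 - p ω) * Real.binEntropy (1 - q ω)
      + (1 - q ω) * Real.binEntropy (1 - p ω))
      ≤ Real.binEntropy ((1 - p ω) * (1 - q ω)) := by
    filter_upwards [hq01] with ω hω
    exact key2var ⟨by linarith [(hp01 ω).2], by linarith [(hp01 ω).1]⟩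
      ⟨by linarith [hω.2], by linarith [hω.1]⟩
  -- integrate
  have hstep : ∫ ω, φR/2 * ((1 - p ω) * Real.binEntropy (1 - q ω)
      + (1 - q ω) * Real.binEntropy (1 - p ω)) ∂μ
      ≤ ∫ ω, Real.binEntropy ((1 - p ω) * (1 - q ω)) ∂μ := by
    apply integral_mono_ae (((hImul1.add hImul2).const_mul _)) hI1 hptwise
  -- independence
  have hmr1 : Measurable (fun t : ℝ => 1 - t) := measurable_const.sub measurable_id
  have hmr2 : Measurable (fun t : ℝ => Real.binEntropy (1 - t)) :=
    Real.binEntropy_continuous.measurable.comp hmr1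
  have hind1 : IndepFun (fun ω => 1 - p ω) (fun ω => Real.binEntropy (1 - q ω)) μ := by
    have := hpq.comp hmr1 hmr2
    simpa [Function.comp_def] using this
  have hind2 : IndepFun (fun ω => Real.binEntropy (1 - p ω)) (fun ω => 1 - q ω) μ := by
    have := hpq.comp hmr2 hmr1
    simpa [Function.comp_def] using this
  have hmul1 : ∫ ω, (1 - p ω) * Real.binEntropy (1 - q ω) ∂μ
      = (∫ ω, (1 - p ω) ∂μ) * ∫ ω, Real.binEntropy (1 - q ω) ∂μ :=
    hind1.integral_fun_mul_eq_mul_integral hIp.aestronglyMeasurable hIbq.aestronglyMeasurable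
  have hmul2 : ∫ ω, (1 - q ω) * Real.binEntropy (1 - p ω) ∂μ
      = (∫ ω, Real.binEntropy (1 - p ω) ∂μ) * ∫ ω, (1 - q ω) ∂μ := by
    have := hind2.integral_fun_mul_eq_mul_integral hIbp.aestronglyMeasurable hIq.aestronglyMeasurable
    simpa [mul_comm] using this
  -- identical distribution
  have hideq1 : ∫ ω, Real.binEntropy (1 - q ω) ∂μ = ∫ ω, Real.binEntropy (1 - p ω) ∂μ := by
    have h := (hid.comp hmr2).integral_eq
    simp only [Function.comp] at h
    exact h.symm
  have hideq2 : ∫ ω, (1 - q ω) ∂μ = ∫ ω, (1 - p ω) ∂μ := by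
    have h := (hid.comp hmr1).integral_eq
    simp only [Function.comp] at h
    exact h.symm
  have hbes : ∀ ω, Real.binEntropy (1 - p ω) = Real.binEntropy (p ω) := fun ω =>
    Real.binEntropy_one_sub _
  have hm1 : ∫ ω, (1 - p ω) ∂μ = 1 - ∫ ω, p ω ∂μ := by
    rw [integral_sub (integrable_const 1) ((integrable_const 1).mono' hp.aestronglyMeasurable
      (ae_of_all _ fun ω => by
        rw [Real.norm_eq_abs, abs_le]
        constructor <;> [linarith [(hp01 ω).1]; exact (hp01 ω).2]))]
    simp
  have hE0 : 0 ≤ ∫ ω, Real.binEntropy (p ω) ∂μ :=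
    integral_nonneg fun ω => by
      simp only [Pi.zero_apply]; exact Real.binEntropy_nonneg (hp01 ω).1 (hp01 ω).2
  have hEm : 1 - u ≤ ∫ ω, (1 - p ω) ∂μ := by rw [hm1]; linarith
  have hmnn : 0 ≤ ∫ ω, (1 - p ω) ∂μ :=
    integral_nonneg fun ω => by
      simp only [Pi.zero_apply]; linarith [(hp01 ω).2]
  -- put everything together
  rw [ge_iff_le]
  calc (1 - u) * φR * ∫ ω, Real.binEntropy (p ω) ∂μ
      ≤ (∫ ω, (1 - p ω) ∂μ) * φR * ∫ ω, Real.binEntropy (p ω) ∂μ := by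
        apply mul_le_mul_of_nonneg_right _ hE0
        apply mul_le_mul_of_nonneg_right hEm phi_pos.le
    _ = φR/2 * ((∫ ω, (1 - p ω) ∂μ) * (∫ ω, Real.binEntropy (1 - p ω) ∂μ)
          + (∫ ω, Real.binEntropy (1 - p ω) ∂μ) * (∫ ω, (1 - p ω) ∂μ)) := by
        simp only [hbes]; ring
    _ = ∫ ω, φR/2 * ((1 - p ω) * Real.binEntropy (1 - q ω)
          + (1 - q ω) * Real.binEntropy (1 - p ω)) ∂μ := by
        rw [integral_const_mul, integral_add hImul1 hImul2, hmul1, hmul2, hideq1, hideq2]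
    _ ≤ ∫ ω, Real.binEntropy ((1 - p ω) * (1 - q ω)) ∂μ := hstep
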